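/- There is a universal constant C such that for every metric space (M, d_M) on n ≥ 2 points, there exist finitely many hierarchically separated trees T_1,…,T_N, each of depth at most C·log n and each having the n points of M as its leaf set, together with nonnegative weights λ_1,…,λ_N summing to 1, such that for every pair of points u, v ∈ M: d_M(u,v) ≤ Σ_{i=1}^N λ_i · d_{T_i}(u,v) ≤ C·(log n)·d_M(u,v), where d_{T_i} denotes the shortest-path metric of T_i. -/

import Mathlib

open scoped Classical

/-- A finite rooted tree, encoded by a parent function together with a
consistent depth function. Edge lengths are given separately: `len v` is the
length of the edge from `v` to its parent (irrelevant at the root). -/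
structure FinRootedTree where
  V : Type
  finiteV : Finite V
  root : V
  parent : V → V
  depth : V → ℕ
  parent_root : parent root = root
  depth_root : depth root = 0
  depth_parent : ∀ v, v ≠ root → depth v = depth (parent v) + 1

/-- Auxiliary fueled recursion computing the distance from a vertex to the root. -/
noncomputable def distAux (T : FinRootedTree) (len : T.V → ℝ) : ℕ → T.V → ℝ
  | 0, _ => 0
  | n + 1, v => if v = T.root then 0 else len v + distAux T len n (T.parent v)

/-- Distance from a vertex to the root (sum of edge lengths on the root path). -/
noncomputable def distToRoot (T : FinRootedTree) (len : T.V → ℝ) (v : T.V) : ℝ :=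
  distAux T len (T.depth v) v

/-- `a` is an ancestor of `v` (possibly `a = v`). -/
def IsAnc (T : FinRootedTree) (a v : T.V) : Prop := ∃ k : ℕ, T.parent^[k] v = a

/-- The shortest-path metric of the tree with edge lengths `len`:
`d(u,v) = dtr(u) + dtr(v) - 2·dtr(lca u v)`, the lca being the common ancestor
furthest from the root. -/
noncomputable def treeDist (T : FinRootedTree) (len : T.V → ℝ) (u v : T.V) : ℝ :=
  distToRoot T len u + distToRoot T len v -
    2 * sSup (distToRoot T len '' {a : T.V | IsAnc T a u ∧ IsAnc T a v})

/-- A leaf: a vertex with no children. -/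
def IsLeaf (T : FinRootedTree) (v : T.V) : Prop := ∀ u : T.V, T.parent u = v → u = v

/-- The HST condition on edge lengths: positive lengths, and every non-root
edge is at most half as long as its parent edge. -/
def IsHSTLen (T : FinRootedTree) (len : T.V → ℝ) : Prop :=
  (∀ v, v ≠ T.root → 0 < len v) ∧
  (∀ v, v ≠ T.root → T.parent v ≠ T.root → len v ≤ len (T.parent v) / 2)

namespace HSTAux

open Finset

variable {M : Type} [Fintype M]

/-- cut indicator pseudometric -/
noncomputable def chi (S : Finset M) (u v : M) : ℝ := if ((u ∈ S) ↔ (v ∈ S)) then 0 else 1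

omit [Fintype M] in
lemma chi_nonneg (S : Finset M) (u v : M) : 0 ≤ chi S u v := by
  unfold chi; split <;> norm_num

omit [Fintype M] in
lemma chi_le_one (S : Finset M) (u v : M) : chi S u v ≤ 1 := by
  unfold chi; split <;> norm_num

/-- the depth-2 HST realizing (approximately) a cut metric -/
noncomputable def cutTree (S : Finset M) : FinRootedTree where
  V := Option Bool ⊕ M
  finiteV := by infer_instance
  root := Sum.inl none
  parent := fun v => match v with
    | Sum.inl _ => Sum.inl none
    | Sum.inr x => Sum.inl (some (decide (x ∈ S)))
  depth := fun v => match v with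
    | Sum.inl none => 0
    | Sum.inl (some _) => 1
    | Sum.inr _ => 2
  parent_root := rfl
  depth_root := rfl
  depth_parent := by
    rintro ((_ | b) | x) h
    · exact absurd rfl h
    · rfl
    · rfl

noncomputable def cutLen (S : Finset M) (W ε : ℝ) : (cutTree S).V → ℝ := fun v =>
  match v with
  | Sum.inl none => 1
  | Sum.inl (some _) => W / 2
  | Sum.inr _ => ε

lemma cutTree_root (S : Finset M) : (cutTree S).root = Sum.inl none := rfl

lemma cutTree_parent_leaf (S : Finset M) (x : M) :
    (cutTree S).parent (Sum.inr x) = Sum.inl (some (decide (x ∈ S))) := rfl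

lemma cutTree_parent_side (S : Finset M) (b : Bool) :
    (cutTree S).parent (Sum.inl (some b)) = Sum.inl none := rfl

lemma dtr_root (S : Finset M) (W ε : ℝ) :
    distToRoot (cutTree S) (cutLen S W ε) (Sum.inl none) = 0 := by
  simp [distToRoot, cutTree, distAux]

lemma distAux_side (S : Finset M) (W ε : ℝ) (b : Bool) :
    distAux (cutTree S) (cutLen S W ε) 1 (Sum.inl (some b)) = W / 2 := by
  erw [distAux, if_neg (by simp [cutTree])]
  simp [distAux, cutLen]

lemma dtr_side (S : Finset M) (W ε : ℝ) (b : Bool) :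
    distToRoot (cutTree S) (cutLen S W ε) (Sum.inl (some b)) = W / 2 :=
  distAux_side S W ε b

lemma dtr_leaf (S : Finset M) (W ε : ℝ) (x : M) :
    distToRoot (cutTree S) (cutLen S W ε) (Sum.inr x) = ε + W / 2 := by
  show distAux _ _ 2 _ = ε + W / 2
  erw [distAux, if_neg (by simp [cutTree]), cutTree_parent_leaf, distAux_side]
  show ε + W / 2 = ε + W / 2
  rfl

lemma iterate_parent_root (S : Finset M) (k : ℕ) :
    (cutTree S).parent^[k] (Sum.inl none) = Sum.inl none :=
  Function.iterate_fixed rfl k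

lemma isAnc_leaf_iff (S : Finset M) (x : M) (a : (cutTree S).V) :
    IsAnc (cutTree S) a (Sum.inr x) ↔
      a = Sum.inr x ∨ a = Sum.inl (some (decide (x ∈ S))) ∨ a = Sum.inl none := by
  constructor
  · rintro ⟨k, rfl⟩
    match k with
    | 0 => left; rfl
    | 1 => right; left; rfl
    | (k + 2) =>
      right; right
      exact (Function.iterate_add_apply _ k 2 _).trans (iterate_parent_root S k)
  · rintro (rfl | rfl | rfl)
    · exact ⟨0, rfl⟩
    · exact ⟨1, rfl⟩
    · exact ⟨2, rfl⟩

lemma cutTree_isLeaf (S : Finset M) (x : M) : IsLeaf (cutTree S) (Sum.inr x) := by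
  intro u h
  match u with
  | Sum.inl none => simp [cutTree] at h
  | Sum.inl (some b) => simp [cutTree] at h
  | Sum.inr y => simp [cutTree] at h

lemma cutTree_leaf_eq (S : Finset M) (hS : S.Nonempty) (hS2 : S ≠ univ)
    (v : (cutTree S).V) (h : IsLeaf (cutTree S) v) : ∃ x : M, Sum.inr x = v := by
  match v with
  | Sum.inr x => exact ⟨x, rfl⟩
  | Sum.inl none =>
    exact absurd (h (Sum.inl (some true)) rfl) (fun hh => by cases hh)
  | Sum.inl (some b) =>
    match b with
    | false =>
      obtain ⟨x, hx⟩ : ∃ x, x ∉ S := by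
        by_contra hc
        push_neg at hc
        exact hS2 (Finset.eq_univ_iff_forall.mpr hc)
      have hd : decide (x ∈ S) = false := by simp [hx]
      have hp : (cutTree S).parent (Sum.inr x) = Sum.inl (some false) := by
        rw [cutTree_parent_leaf, hd]
      exact absurd (h (Sum.inr x) hp) (fun hh => by cases hh)
    | true =>
      obtain ⟨x, hx⟩ := hS
      have hd : decide (x ∈ S) = true := by simp [hx]
      have hp : (cutTree S).parent (Sum.inr x) = Sum.inl (some true) := by
        rw [cutTree_parent_leaf, hd]
      exact absurd (h (Sum.inr x) hp) (fun hh => by cases hh)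

lemma cutTree_isHST (S : Finset M) {W ε : ℝ} (hW : 0 < W) (hε : 0 < ε) (h4 : ε ≤ W / 4) :
    IsHSTLen (cutTree S) (cutLen S W ε) := by
  constructor
  · intro v h
    match v with
    | Sum.inl none => exact absurd rfl h
    | Sum.inl (some b) => show (0:ℝ) < W / 2; linarith
    | Sum.inr x => exact hε
  · intro v h hp
    match v with
    | Sum.inl none => exact absurd rfl h
    | Sum.inl (some b) => exact absurd (cutTree_parent_side S b) hp
    | Sum.inr x =>
      rw [cutTree_parent_leaf]
      show ε ≤ (W / 2) / 2
      linarith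

lemma cutTree_depth_leaf (S : Finset M) (x : M) : (cutTree S).depth (Sum.inr x) = 2 := rfl

lemma cutTree_treeDist (S : Finset M) {W ε : ℝ} (hW : 0 < W) (hε : 0 < ε) (u v : M) :
    treeDist (cutTree S) (cutLen S W ε) (Sum.inr u) (Sum.inr v)
      = W * chi S u v + (if u = v then 0 else 2 * ε) := by
  by_cases huv : u = v
  · subst huv
    have hset : {a : (cutTree S).V | IsAnc (cutTree S) a (Sum.inr u) ∧ IsAnc (cutTree S) a (Sum.inr u)}
        = {Sum.inr u, Sum.inl (some (decide (u ∈ S))), Sum.inl none} := by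
      ext a; simp [isAnc_leaf_iff, Set.mem_insert_iff]; exact Iff.rfl
    erw [treeDist, hset]
    erw [Set.image_insert_eq, Set.image_insert_eq, Set.image_singleton,
      dtr_leaf, dtr_side, dtr_root]
    have h1 : (W / 2) ⊔ (0:ℝ) = W / 2 := sup_eq_left.mpr (by linarith)
    rw [csSup_insert (Set.Finite.bddAbove (Set.toFinite _)) (by simp), csSup_pair, h1,
      sup_eq_left.mpr (by linarith : W / 2 ≤ ε + W / 2)]
    simp [chi]
    ring
  · by_cases hside : (u ∈ S) ↔ (v ∈ S)
    · have hdec : decide (u ∈ S) = decide (v ∈ S) := decide_eq_decide.mpr hside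
      have hset : {a : (cutTree S).V | IsAnc (cutTree S) a (Sum.inr u) ∧ IsAnc (cutTree S) a (Sum.inr v)}
          = {Sum.inl (some (decide (u ∈ S))), Sum.inl none} := by
        ext a
        simp only [Set.mem_setOf_eq, isAnc_leaf_iff, Set.mem_insert_iff, Set.mem_singleton_iff, hdec]
        constructor
        · rintro ⟨h1, h2⟩
          rcases h1 with rfl | rfl | rfl
          · rcases h2 with h | h | h
            · exact absurd (Sum.inr.inj h) huv
            · simp_all
            · simp_all
          · exact Or.inl rfl
          · exact Or.inr rfl
        · rintro (rfl | rfl)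
          · exact ⟨Or.inr (Or.inl rfl), Or.inr (Or.inl rfl)⟩
          · exact ⟨Or.inr (Or.inr rfl), Or.inr (Or.inr rfl)⟩
      erw [treeDist, hset]
      erw [Set.image_insert_eq, Set.image_singleton, dtr_side, dtr_root, dtr_leaf, dtr_leaf,
        csSup_pair, sup_eq_left.mpr (by linarith : (0:ℝ) ≤ W / 2)]
      simp only [chi, if_pos hside, if_neg huv]
      ring
    · have hdec : decide (u ∈ S) ≠ decide (v ∈ S) := fun h => hside (decide_eq_decide.mp h)
      have hset : {a : (cutTree S).V | IsAnc (cutTree S) a (Sum.inr u) ∧ IsAnc (cutTree S) a (Sum.inr v)}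
          = {Sum.inl none} := by
        ext a
        simp only [Set.mem_setOf_eq, isAnc_leaf_iff, Set.mem_singleton_iff]
        constructor
        · rintro ⟨h1, h2⟩
          rcases h1 with rfl | rfl | rfl
          · rcases h2 with h | h | h
            · exact absurd (Sum.inr.inj h) huv
            · simp_all
            · simp_all
          · rcases h2 with h | h | h
            · simp_all
            · exact absurd (Option.some.inj (Sum.inl.inj h)) hdec
            · simp_all; exact rfl
          · rfl
        · rintro rfl
          exact ⟨Or.inr (Or.inr rfl), Or.inr (Or.inr rfl)⟩
      erw [treeDist, hset, Set.image_singleton, dtr_root, dtr_leaf, dtr_leaf, csSup_singleton]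
      simp only [chi, if_neg hside, if_neg huv]
      ring

end HSTAux

namespace HSTAux

open Finset

/-- gap to the next larger value in `V` -/
noncomputable def gapV (V : Finset ℝ) (c : ℝ) : ℝ :=
  if h : (V.filter (fun x => c < x)).Nonempty then (V.filter (fun x => c < x)).min' h - c else 0

lemma gapV_nonneg (V : Finset ℝ) (c : ℝ) : 0 ≤ gapV V c := by
  unfold gapV
  split
  · rename_i h
    have := (V.filter (fun x => c < x)).min'_mem h
    rw [mem_filter] at this
    linarith [this.2]
  · exact le_refl 0

lemma teleSum (V : Finset ℝ) (b' : ℝ) (hb' : b' ∈ V) :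
    ∀ n b, b ∈ V → b ≤ b' → (V.filter fun c => b ≤ c ∧ c < b').card = n →
      ∑ c ∈ V.filter (fun c => b ≤ c ∧ c < b'), gapV V c = b' - b := by
  intro n
  induction n using Nat.strong_induction_on with
  | _ n ih =>
    intro b hb hbb' hcard
    rcases eq_or_lt_of_le hbb' with rfl | hlt
    · have he : V.filter (fun c => b ≤ c ∧ c < b) = ∅ := by
        apply filter_eq_empty_iff.mpr
        rintro c _ ⟨h1, h2⟩
        linarith
      rw [he]
      simp
    · have hne : (V.filter (fun x => b < x)).Nonempty := ⟨b', mem_filter.mpr ⟨hb', hlt⟩⟩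
      set b₂ := (V.filter (fun x => b < x)).min' hne with hb₂def
      have hb₂mem := (V.filter (fun x => b < x)).min'_mem hne
      rw [mem_filter] at hb₂mem
      have hb₂V : b₂ ∈ V := hb₂mem.1
      have hbb₂ : b < b₂ := hb₂mem.2
      have hb₂b' : b₂ ≤ b' := min'_le _ _ (mem_filter.mpr ⟨hb', hlt⟩)
      have hsplit : V.filter (fun c => b ≤ c ∧ c < b') =
          insert b (V.filter fun c => b₂ ≤ c ∧ c < b') := by
        ext c
        simp only [mem_filter, mem_insert]
        constructor
        · rintro ⟨hcV, h1, h2⟩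
          rcases eq_or_lt_of_le h1 with rfl | hbc
          · exact Or.inl rfl
          · exact Or.inr ⟨hcV, min'_le _ _ (mem_filter.mpr ⟨hcV, hbc⟩), h2⟩
        · rintro (rfl | ⟨hcV, h1, h2⟩)
          · exact ⟨hb, le_refl _, hlt⟩
          · exact ⟨hcV, by linarith, h2⟩
      have hbnot : b ∉ V.filter (fun c => b₂ ≤ c ∧ c < b') := by
        rw [mem_filter]
        rintro ⟨_, h1, _⟩
        linarith
      have hgap : gapV V b = b₂ - b := by rw [gapV, dif_pos hne]
      have hcard2 : (V.filter fun c => b₂ ≤ c ∧ c < b').card < n := by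
        rw [hsplit, card_insert_of_notMem hbnot] at hcard
        omega
      rw [hsplit, sum_insert hbnot, hgap,
        ih _ hcard2 b₂ hb₂V hb₂b' rfl]
      ring

lemma line_cut_aux {M : Type} [Fintype M] (a : M → ℝ) (u v : M) (h : a u ≤ a v) :
    ∑ c ∈ Finset.image a Finset.univ,
        gapV (Finset.image a Finset.univ) c * (if ((a u ≤ c) ↔ (a v ≤ c)) then (0:ℝ) else 1)
      = a v - a u := by
  classical
  set V := Finset.image a Finset.univ with hV
  have hterm : ∀ c ∈ V, gapV V c * (if ((a u ≤ c) ↔ (a v ≤ c)) then (0:ℝ) else 1)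
      = if (a u ≤ c ∧ c < a v) then gapV V c else 0 := by
    intro c _
    by_cases h1 : a u ≤ c ∧ c < a v
    · rw [if_pos h1, if_neg, mul_one]
      rintro ⟨h3, _⟩
      exact absurd (h3 h1.1) (not_le.mpr h1.2)
    · rw [if_neg h1, if_pos, mul_zero]
      constructor
      · intro hu
        by_contra hvc
        exact h1 ⟨hu, not_le.mp hvc⟩
      · intro hv
        exact le_trans h hv
  rw [Finset.sum_congr rfl hterm, ← Finset.sum_filter]
  exact teleSum V (a v) (Finset.mem_image_of_mem a (Finset.mem_univ v)) _ (a u)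
    (Finset.mem_image_of_mem a (Finset.mem_univ u)) h rfl

lemma line_cut {M : Type} [Fintype M] (a : M → ℝ) (u v : M) :
    |a u - a v| = ∑ c ∈ Finset.image a Finset.univ,
        gapV (Finset.image a Finset.univ) c * (if ((a u ≤ c) ↔ (a v ≤ c)) then (0:ℝ) else 1) := by
  rcases le_total (a u) (a v) with h | h
  · rw [line_cut_aux a u v h, abs_sub_comm, abs_of_nonneg (by linarith)]
  · have : ∀ c ∈ Finset.image a Finset.univ,
        gapV (Finset.image a Finset.univ) c * (if ((a u ≤ c) ↔ (a v ≤ c)) then (0:ℝ) else 1)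
        = gapV (Finset.image a Finset.univ) c * (if ((a v ≤ c) ↔ (a u ≤ c)) then (0:ℝ) else 1) := by
      intro c _
      exact congrArg _ (if_congr iff_comm rfl rfl)
    rw [Finset.sum_congr rfl this, line_cut_aux a v u h, abs_of_nonneg (by linarith)]

end HSTAux

namespace HSTAux

open Finset

variable {M : Type} [Fintype M]

/-- Bernoulli(p) product weight of a subset -/
noncomputable def Pw (p : ℝ) (A : Finset M) : ℝ :=
  p ^ A.card * (1 - p) ^ (Finset.univ \ A).card

lemma Pw_nonneg {p : ℝ} (hp0 : 0 ≤ p) (hp1 : p ≤ 1) (A : Finset M) : 0 ≤ Pw p A := by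
  unfold Pw
  have h1 : (0:ℝ) ≤ 1 - p := by linarith
  positivity

lemma sum_Pw (p : ℝ) : ∑ A ∈ (Finset.univ : Finset M).powerset, Pw p A = 1 := by
  classical
  have h := Finset.prod_add (fun _ : M => p) (fun _ : M => 1 - p) Finset.univ
  simp only [Finset.prod_const] at h
  unfold Pw
  rw [← h, add_sub_cancel, one_pow]

lemma sum_Pw_miss (p : ℝ) (T : Finset M) :
    ∑ A ∈ (Finset.univ : Finset M).powerset.filter (fun A => A ∩ T = ∅), Pw p A
      = (1 - p) ^ T.card := by
  classical
  have h1 : (Finset.univ : Finset M).powerset.filter (fun A => A ∩ T = ∅)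
      = (Finset.univ \ T).powerset := by
    ext A
    simp only [mem_filter, mem_powerset, Finset.subset_sdiff]
    rw [← Finset.disjoint_iff_inter_eq_empty]
  rw [h1]
  have h2 : ∀ A ∈ (Finset.univ \ T).powerset,
      Pw p A = (1 - p) ^ T.card * (p ^ A.card * (1 - p) ^ ((Finset.univ \ T) \ A).card) := by
    intro A hA
    rw [mem_powerset, Finset.subset_sdiff] at hA
    have hu : Finset.univ \ A = T ∪ ((Finset.univ \ T) \ A) := by
      ext x
      simp only [mem_sdiff, mem_union, mem_univ, true_and]
      constructor
      · intro hx
        by_cases hxT : x ∈ T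
        · exact Or.inl hxT
        · exact Or.inr ⟨hxT, hx⟩
      · rintro (hxT | hx)
        · exact fun hxA => (Finset.disjoint_left.mp hA.2 hxA) hxT
        · exact hx.2
    have hd : Disjoint T ((Finset.univ \ T) \ A) := by
      apply Finset.disjoint_left.mpr
      intro x hxT hx
      rw [mem_sdiff, mem_sdiff] at hx
      exact hx.1.2 hxT
    rw [Pw, hu, Finset.card_union_of_disjoint hd, pow_add]
    ring
  rw [Finset.sum_congr rfl h2, ← Finset.mul_sum]
  have h3 := Finset.prod_add (fun _ : M => p) (fun _ : M => 1 - p) (Finset.univ \ T)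
  simp only [Finset.prod_const] at h3
  rw [← h3, add_sub_cancel, one_pow, mul_one]

lemma sum_Pw_event (p : ℝ) (S S' : Finset M) (hdisj : S ∩ S' = ∅) :
    ∑ A ∈ (Finset.univ : Finset M).powerset.filter
        (fun A => (A ∩ S).Nonempty ∧ A ∩ S' = ∅), Pw p A
      = (1 - p) ^ S'.card - (1 - p) ^ (S.card + S'.card) := by
  classical
  have key := Finset.sum_filter_add_sum_filter_not
    ((Finset.univ : Finset M).powerset.filter (fun A => A ∩ S' = ∅))
    (fun A => (A ∩ S).Nonempty) (Pw p)
  have e1 : ((Finset.univ : Finset M).powerset.filter (fun A => A ∩ S' = ∅)).filter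
      (fun A => (A ∩ S).Nonempty)
      = (Finset.univ : Finset M).powerset.filter (fun A => (A ∩ S).Nonempty ∧ A ∩ S' = ∅) := by
    rw [Finset.filter_filter]
    apply Finset.filter_congr
    intro A _
    tauto
  have e2 : ((Finset.univ : Finset M).powerset.filter (fun A => A ∩ S' = ∅)).filter
      (fun A => ¬(A ∩ S).Nonempty)
      = (Finset.univ : Finset M).powerset.filter (fun A => A ∩ (S ∪ S') = ∅) := by
    rw [Finset.filter_filter]
    apply Finset.filter_congr
    intro A _
    simp only [Finset.not_nonempty_iff_eq_empty, Finset.inter_union_distrib_left]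
    constructor
    · rintro ⟨h1, h2⟩
      rw [h1, h2]
      simp
    · intro h
      rw [Finset.union_eq_empty] at h
      tauto
  rw [e1, e2] at key
  have hcard : (S ∪ S').card = S.card + S'.card :=
    Finset.card_union_of_disjoint (Finset.disjoint_iff_inter_eq_empty.mpr hdisj)
  rw [sum_Pw_miss, sum_Pw_miss, hcard] at key
  linarith

/-- `(1 - 2⁻ᵗ) ^ m ≥ 1/4` for `m ≤ 2^t - 1`. -/
lemma pow_miss_bound (t : ℕ) (ht : 1 ≤ t) (m : ℕ) (hm : m ≤ 2 ^ t - 1) :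
    (1/4 : ℝ) ≤ (1 - (2⁻¹ : ℝ) ^ t) ^ m := by
  set p : ℝ := (2⁻¹ : ℝ) ^ t with hp
  have hp0 : 0 < p := by positivity
  have hple : p ≤ 2⁻¹ := by
    rw [hp]
    calc (2⁻¹ : ℝ) ^ t ≤ (2⁻¹ : ℝ) ^ 1 :=
          pow_le_pow_of_le_one (by norm_num) (by norm_num) ht
      _ = 2⁻¹ := pow_one _
  have h1p0 : (0:ℝ) ≤ 1 - p := by linarith
  have h1p1 : (1:ℝ) - p ≤ 1 := by linarith
  have step1 : (1 - p) ^ (2^t - 1) ≤ (1 - p) ^ m :=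
    pow_le_pow_of_le_one h1p0 h1p1 hm
  refine le_trans ?_ step1
  set k : ℕ := 2 ^ t - 1 with hk
  have hk1 : 1 ≤ k := by
    have : 2 ≤ 2 ^ t := by
      calc 2 = 2 ^ 1 := (pow_one 2).symm
        _ ≤ 2 ^ t := Nat.pow_le_pow_right (by norm_num) ht
    omega
  have hkr : ((k : ℝ) + 1) = (2 : ℝ) ^ t := by
    have h5 : k + 1 = 2 ^ t := by
      have : 1 ≤ 2 ^ t := Nat.one_le_two_pow
      omega
    calc ((k : ℝ) + 1) = ((k + 1 : ℕ) : ℝ) := by push_cast; ring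
      _ = ((2 ^ t : ℕ) : ℝ) := by rw [h5]
      _ = (2:ℝ) ^ t := by push_cast; ring
  have hkpos : (0:ℝ) < k := by exact_mod_cast hk1
  have hpinv : p = ((k:ℝ) + 1)⁻¹ := by
    rw [hkr, hp, inv_pow]
  have h1mp : 1 - p = (k : ℝ) / ((k:ℝ) + 1) := by
    rw [hpinv]
    field_simp
    ring
  have hb : (1:ℝ) + 1/(k:ℝ) = ((k:ℝ) + 1) / (k:ℝ) := by field_simp
  have he1 : (1 + 1/(k:ℝ)) ≤ Real.exp (1/(k:ℝ)) := by
    have := Real.add_one_le_exp (1/(k:ℝ))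
    linarith
  have he2 : (1 + 1/(k:ℝ)) ^ k ≤ Real.exp (1/(k:ℝ)) ^ k :=
    pow_le_pow_left₀ (by positivity) he1 k
  have he3 : Real.exp (1/(k:ℝ)) ^ k = Real.exp 1 := by
    rw [← Real.exp_nat_mul]
    congr 1
    field_simp
  have he4 : (1 + 1/(k:ℝ)) ^ k ≤ 4 := by
    rw [he3] at he2
    have := Real.exp_one_lt_d9
    linarith
  have hbpos : (0:ℝ) < (1 + 1/(k:ℝ)) ^ k := by positivity
  have hinv : ((k : ℝ) / ((k:ℝ) + 1)) ^ k = ((1 + 1/(k:ℝ)) ^ k)⁻¹ := by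
    rw [← inv_pow]
    congr 1
    rw [hb]
    rw [inv_div]
  have h4 : 1/(4:ℝ) ≤ 1/((1 + 1/(k:ℝ))^k) := one_div_le_one_div_of_le hbpos he4
  rw [h1mp, hinv, ← one_div]
  exact h4
  
/-- `(1 - 2⁻ᵗ) ^ m ≤ 2/3` for `m ≥ 2^(t-1)`. -/
lemma pow_hit_bound (t : ℕ) (ht : 1 ≤ t) (m : ℕ) (hm : 2 ^ (t-1) ≤ m) :
    (1 - (2⁻¹ : ℝ) ^ t) ^ m ≤ (2/3 : ℝ) := by
  set p : ℝ := (2⁻¹ : ℝ) ^ t with hp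
  have hp0 : 0 < p := by positivity
  have hple : p ≤ 2⁻¹ := by
    rw [hp]
    calc (2⁻¹ : ℝ) ^ t ≤ (2⁻¹ : ℝ) ^ 1 :=
          pow_le_pow_of_le_one (by norm_num) (by norm_num) ht
      _ = 2⁻¹ := pow_one _
  have h1p0 : (0:ℝ) ≤ 1 - p := by linarith
  have h1p1 : (1:ℝ) - p ≤ 1 := by linarith
  set k : ℕ := 2 ^ (t-1) with hk
  have step1 : (1 - p) ^ m ≤ (1 - p) ^ k := pow_le_pow_of_le_one h1p0 h1p1 hm
  refine le_trans step1 ?_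
  have hkp : (k : ℝ) * p = 2⁻¹ := by
    rw [hp, hk]
    push_cast
    have h2t : (2:ℝ)^t = 2^(t-1) * 2 := by rw [← pow_succ]; congr 1; omega
    rw [inv_pow, h2t, mul_inv]
    have hne : ((2:ℝ)^(t-1)) ≠ 0 := by positivity
    field_simp
  have hq0 : (0:ℝ) ≤ p / (1 - p) := by
    apply div_nonneg (le_of_lt hp0)
    linarith
  have hbern : 1 + (k:ℝ) * (p / (1-p)) ≤ (1 + p/(1-p)) ^ k :=
    one_add_mul_le_pow (by linarith) k
  have hple2 : (1:ℝ) + (k:ℝ) * p ≤ 1 + (k:ℝ) * (p / (1-p)) := by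
    have hpq : p ≤ p / (1 - p) := by
      rw [le_div_iff₀ (by linarith)]
      nlinarith
    have hk0 : (0:ℝ) ≤ (k:ℝ) := Nat.cast_nonneg k
    nlinarith
  have hprod : (1 - p) * (1 + p/(1-p)) = 1 := by
    have hne : (1:ℝ) - p ≠ 0 := by linarith
    field_simp
    ring
  have hkey : (1-p)^k * (1 + (k:ℝ)*p) ≤ 1 := by
    calc (1-p)^k * (1 + (k:ℝ)*p) ≤ (1-p)^k * (1 + p/(1-p))^k := by
          apply mul_le_mul_of_nonneg_left (le_trans hple2 hbern) (by positivity)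
      _ = ((1-p) * (1 + p/(1-p)))^k := by rw [mul_pow]
      _ = 1 := by rw [hprod, one_pow]
  rw [hkp] at hkey
  nlinarith [pow_nonneg h1p0 k]

end HSTAux

namespace HSTAux

open Finset

section MetricPart

variable {M : Type} [MetricSpace M] [Fintype M]

/-- distance to a finite set (0 if empty) -/
noncomputable def dA (A : Finset M) (x : M) : ℝ :=
  if h : A.Nonempty then A.inf' h (fun a => dist x a) else 0

lemma dA_le {A : Finset M} {a : M} (x : M) (ha : a ∈ A) : dA A x ≤ dist x a := by
  rw [dA, dif_pos ⟨a, ha⟩]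
  exact inf'_le _ ha

lemma le_dA {A : Finset M} (hA : A.Nonempty) {x : M} {r : ℝ}
    (h : ∀ a ∈ A, r ≤ dist x a) : r ≤ dA A x := by
  rw [dA, dif_pos hA]
  exact le_inf' hA _ h

lemma dA_lip (A : Finset M) (u v : M) : |dA A u - dA A v| ≤ dist u v := by
  by_cases hA : A.Nonempty
  · rw [abs_sub_le_iff]
    constructor
    · obtain ⟨a, ha, hav⟩ := Finset.exists_mem_eq_inf' hA (fun a => dist v a)
      have h1 : dA A v = dist v a := by rw [dA, dif_pos hA, hav]
      have h2 : dA A u ≤ dist u a := dA_le u ha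
      have h3 : dist u a ≤ dist u v + dist a v := dist_triangle_right u a v
      rw [dist_comm a v] at h3
      linarith
    · obtain ⟨a, ha, hav⟩ := Finset.exists_mem_eq_inf' hA (fun a => dist u a)
      have h1 : dA A u = dist u a := by rw [dA, dif_pos hA, hav]
      have h2 : dA A v ≤ dist v a := dA_le v ha
      have h3 : dist v a ≤ dist v u + dist a u := dist_triangle_right v a u
      rw [dist_comm a u, dist_comm v u] at h3
      linarith
  · rw [dA, dif_neg hA, dA, dif_neg hA]
    simpa using dist_nonneg

/-- the per-scale Bourgain estimate -/
lemma scale_core (t : ℕ) (ht : 1 ≤ t) (w w' : M)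
    (S S' : Finset M) (hdisj : S ∩ S' = ∅) (hScard : 2^(t-1) ≤ S.card)
    (hS'card : S'.card < 2^t) (r1 r2 : ℝ) (hr12 : r1 ≤ r2)
    (hSr : ∀ a ∈ S, dist w a ≤ r1) (hS'r : ∀ a, a ∉ S' → r2 ≤ dist w' a) :
    (1/12) * (r2 - r1) ≤
      ∑ A ∈ (Finset.univ : Finset M).powerset, Pw ((2⁻¹:ℝ)^t) A * |dA A w - dA A w'| := by
  classical
  set p : ℝ := (2⁻¹:ℝ)^t with hp
  have hp0 : 0 ≤ p := by positivity
  have hp1 : p ≤ 1 := by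
    rw [hp]
    exact pow_le_one₀ (by norm_num) (by norm_num)
  set E := (Finset.univ : Finset M).powerset.filter
    (fun A => (A ∩ S).Nonempty ∧ A ∩ S' = ∅) with hE
  have hEsub : E ⊆ (Finset.univ : Finset M).powerset := filter_subset _ _
  have hterm : ∀ A ∈ E, r2 - r1 ≤ |dA A w - dA A w'| := by
    intro A hA
    rw [hE, mem_filter] at hA
    obtain ⟨-, hne', hmiss⟩ := hA
    obtain ⟨a, ha⟩ := hne'
    rw [mem_inter] at ha
    have hAne : A.Nonempty := ⟨a, ha.1⟩
    have h_w : dA A w ≤ r1 := le_trans (dA_le w ha.1) (hSr a ha.2)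
    have h_w' : r2 ≤ dA A w' := by
      apply le_dA hAne
      intro b hb
      apply hS'r
      intro hbS'
      have hmem : b ∈ A ∩ S' := mem_inter.mpr ⟨hb, hbS'⟩
      rw [hmiss] at hmem
      exact absurd hmem (notMem_empty b)
    calc r2 - r1 ≤ dA A w' - dA A w := by linarith
      _ ≤ |dA A w - dA A w'| := by rw [abs_sub_comm]; exact le_abs_self _
  have step1 : ∑ A ∈ E, Pw p A * |dA A w - dA A w'| ≤
      ∑ A ∈ (Finset.univ : Finset M).powerset, Pw p A * |dA A w - dA A w'| := by
    apply sum_le_sum_of_subset_of_nonneg hEsub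
    intro A _ _
    exact mul_nonneg (Pw_nonneg hp0 hp1 A) (abs_nonneg _)
  have step2 : ∑ A ∈ E, Pw p A * (r2 - r1) ≤ ∑ A ∈ E, Pw p A * |dA A w - dA A w'| := by
    apply sum_le_sum
    intro A hA
    exact mul_le_mul_of_nonneg_left (hterm A hA) (Pw_nonneg hp0 hp1 A)
  have step3 : ∑ A ∈ E, Pw p A * (r2 - r1) =
      ((1 - p) ^ S'.card - (1 - p) ^ (S.card + S'.card)) * (r2 - r1) := by
    rw [← Finset.sum_mul, hE, sum_Pw_event p S S' hdisj]
  have hb1 : (1/4:ℝ) ≤ (1-p)^S'.card :=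
    pow_miss_bound t ht _ (Nat.le_pred_of_lt hS'card)
  have hb3 : (1-p)^S.card ≤ 2/3 := pow_hit_bound t ht _ hScard
  have hb4 : (1/12:ℝ) ≤ (1 - p) ^ S'.card - (1 - p) ^ (S.card + S'.card) := by
    rw [pow_add]
    nlinarith
  have step4 : (1/12) * (r2 - r1) ≤
      ((1 - p) ^ S'.card - (1 - p) ^ (S.card + S'.card)) * (r2 - r1) :=
    mul_le_mul_of_nonneg_right hb4 (by linarith)
  linarith

end MetricPart

end HSTAux

namespace HSTAux

open Finset

section MetricPart2

variable {M : Type} [MetricSpace M] [Fintype M]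

noncomputable def cB (w : M) (r : ℝ) : Finset M := Finset.univ.filter (fun x => dist w x ≤ r)
noncomputable def oB (w : M) (r : ℝ) : Finset M := Finset.univ.filter (fun x => dist w x < r)
noncomputable def DU (u v : M) : Finset ℝ :=
  (Finset.image (dist u) Finset.univ) ∪ (Finset.image (dist v) Finset.univ)
def condB (u v : M) (t : ℕ) (r : ℝ) : Prop := 2^t ≤ (cB u r).card ∧ 2^t ≤ (cB v r).card
noncomputable def Dk (u v : M) (t : ℕ) : Finset ℝ := (DU u v).filter (condB u v t)
noncomputable def rr (u v : M) (t : ℕ) : ℝ :=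
  min (dist u v / 4) (if h : (Dk u v t).Nonempty then (Dk u v t).min' h else dist u v / 4)

lemma DU_nonneg (u v : M) : ∀ r ∈ DU u v, 0 ≤ r := by
  intro r hr
  rw [DU, mem_union] at hr
  rcases hr with h | h <;>
  · rw [mem_image] at h
    obtain ⟨x, _, rfl⟩ := h
    exact dist_nonneg

lemma rr_le (u v : M) (t : ℕ) : rr u v t ≤ dist u v / 4 := by
  unfold rr; exact min_le_left _ _

lemma rr_nonneg (u v : M) (t : ℕ) : 0 ≤ rr u v t := by
  unfold rr
  apply le_min (by positivity)
  split
  · rename_i h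
    exact DU_nonneg u v _ (mem_filter.mp ((Dk u v t).min'_mem h)).1
  · positivity

lemma rr_zero (u v : M) (hd : 0 < dist u v) : rr u v 0 = 0 := by
  have hc : condB u v 0 0 := by
    constructor <;> rw [pow_zero]
    · exact Finset.card_pos.mpr ⟨u, mem_filter.mpr ⟨mem_univ u, by simp⟩⟩
    · exact Finset.card_pos.mpr ⟨v, mem_filter.mpr ⟨mem_univ v, by simp⟩⟩
  have h0DU : (0:ℝ) ∈ DU u v :=
    mem_union_left _ (mem_image.mpr ⟨u, mem_univ u, dist_self u⟩)
  have h0Dk : (0:ℝ) ∈ Dk u v 0 := mem_filter.mpr ⟨h0DU, hc⟩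
  have hne : (Dk u v 0).Nonempty := ⟨0, h0Dk⟩
  have hmin : (Dk u v 0).min' hne = 0 :=
    le_antisymm (min'_le _ _ h0Dk)
      (DU_nonneg u v _ (mem_filter.mp ((Dk u v 0).min'_mem hne)).1)
  unfold rr
  rw [dif_pos hne, hmin]
  exact min_eq_right (by linarith)

lemma rr_top (u v : M) (q : ℕ) (hq : Fintype.card M ≤ 2^q) (hd : 0 < dist u v) :
    rr u v q = dist u v / 4 := by
  have claim : ∀ r ∈ Dk u v q, dist u v / 4 ≤ r := by
    intro r hr
    rw [Dk, mem_filter] at hr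
    obtain ⟨hrDU, hc1, hc2⟩ := hr
    by_contra hlt
    push_neg at hlt
    have hdisj : Disjoint (cB u r) (cB v r) := by
      apply Finset.disjoint_left.mpr
      intro x hx1 hx2
      rw [cB, mem_filter] at hx1 hx2
      have htr := dist_triangle u x v
      have hc : dist x v = dist v x := dist_comm x v
      linarith [hx1.2, hx2.2]
    have hcu : (cB u r ∪ cB v r).card = (cB u r).card + (cB v r).card :=
      card_union_of_disjoint hdisj
    have hle : (cB u r ∪ cB v r).card ≤ Fintype.card M := by
      rw [← Finset.card_univ]
      exact card_le_univ _
    have hpow : 0 < 2^q := Nat.pow_pos (by norm_num)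
    omega
  by_cases hne : (Dk u v q).Nonempty
  · unfold rr
    rw [dif_pos hne]
    exact min_eq_left (claim _ (min'_mem _ hne))
  · unfold rr
    rw [dif_neg hne, min_self]

lemma rr_cond (u v : M) (t : ℕ) (h : rr u v t < dist u v / 4) : condB u v t (rr u v t) := by
  by_cases hne : (Dk u v t).Nonempty
  · have hrr : rr u v t = (Dk u v t).min' hne := by
      unfold rr at h ⊢
      rw [dif_pos hne] at h ⊢
      rcases min_lt_iff.mp h with h' | h'
      · exact absurd h' (lt_irrefl _)
      · exact min_eq_right (le_of_lt h')
    rw [hrr]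
    exact (mem_filter.mp ((Dk u v t).min'_mem hne)).2
  · unfold rr at h
    rw [dif_neg hne, min_self] at h
    exact absurd h (lt_irrefl _)

/-- the Bourgain-style sum of expected coordinate differences -/
noncomputable def FF (q : ℕ) (u v : M) : ℝ :=
  ∑ i ∈ Finset.range q, ∑ A ∈ (Finset.univ : Finset M).powerset,
    Pw ((2⁻¹:ℝ)^(i+1)) A * |dA A u - dA A v|

lemma p_mem (i : ℕ) : (0:ℝ) ≤ (2⁻¹:ℝ)^(i+1) ∧ ((2⁻¹:ℝ)^(i+1)) ≤ 1 :=
  ⟨by positivity, pow_le_one₀ (by norm_num) (by norm_num)⟩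

lemma FF_nonneg (q : ℕ) (u v : M) : 0 ≤ FF q u v := by
  apply sum_nonneg
  intro i _
  apply sum_nonneg
  intro A _
  exact mul_nonneg (Pw_nonneg (p_mem i).1 (p_mem i).2 A) (abs_nonneg _)

lemma FF_upper (q : ℕ) (u v : M) : FF q u v ≤ q * dist u v := by
  have hinner : ∀ i ∈ Finset.range q,
      ∑ A ∈ (Finset.univ : Finset M).powerset, Pw ((2⁻¹:ℝ)^(i+1)) A * |dA A u - dA A v|
        ≤ dist u v := by
    intro i _
    calc ∑ A ∈ (Finset.univ : Finset M).powerset, Pw ((2⁻¹:ℝ)^(i+1)) A * |dA A u - dA A v|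
        ≤ ∑ A ∈ (Finset.univ : Finset M).powerset, Pw ((2⁻¹:ℝ)^(i+1)) A * dist u v := by
          apply sum_le_sum
          intro A _
          exact mul_le_mul_of_nonneg_left (dA_lip A u v)
            (Pw_nonneg (p_mem i).1 (p_mem i).2 A)
      _ = dist u v := by rw [← Finset.sum_mul, sum_Pw, one_mul]
  calc FF q u v ≤ ∑ _i ∈ Finset.range q, dist u v := sum_le_sum hinner
    _ = q * dist u v := by rw [Finset.sum_const, card_range, nsmul_eq_mul]

lemma FF_lower (q : ℕ) (hq : Fintype.card M ≤ 2^q) (u v : M) :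
    dist u v ≤ 48 * FF q u v := by
  by_cases huv : u = v
  · subst huv
    simp only [dist_self]
    linarith [FF_nonneg (M := M) q u u]
  · have hd : 0 < dist u v := dist_pos.mpr huv
    have hscale : ∀ i ∈ Finset.range q,
        (1/12) * (rr u v (i+1) - rr u v i) ≤
          ∑ A ∈ (Finset.univ : Finset M).powerset,
            Pw ((2⁻¹:ℝ)^(i+1)) A * |dA A u - dA A v| := by
      intro i _
      have hsum_nonneg : (0:ℝ) ≤ ∑ A ∈ (Finset.univ : Finset M).powerset,
          Pw ((2⁻¹:ℝ)^(i+1)) A * |dA A u - dA A v| := by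
        apply sum_nonneg
        intro A _
        exact mul_nonneg (Pw_nonneg (p_mem i).1 (p_mem i).2 A) (abs_nonneg _)
      by_cases hlt : rr u v i < rr u v (i+1)
      · have hri4 : rr u v i < dist u v / 4 := lt_of_lt_of_le hlt (rr_le u v (i+1))
        have hcondi : condB u v i (rr u v i) := rr_cond u v i hri4
        have hopen : (oB u (rr u v (i+1))).card < 2^(i+1) ∨
            (oB v (rr u v (i+1))).card < 2^(i+1) := by
          by_contra hc
          push_neg at hc
          obtain ⟨hcu, hcv⟩ := hc
          have huo : u ∈ oB u (rr u v (i+1)) := by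
            rw [oB, mem_filter]
            exact ⟨mem_univ u, by rw [dist_self]; exact lt_of_le_of_lt (rr_nonneg u v i) hlt⟩
          have hvo : v ∈ oB v (rr u v (i+1)) := by
            rw [oB, mem_filter]
            exact ⟨mem_univ v, by rw [dist_self]; exact lt_of_le_of_lt (rr_nonneg u v i) hlt⟩
          have hneU : ((oB u (rr u v (i+1))).image (dist u)).Nonempty :=
            ⟨_, mem_image_of_mem _ huo⟩
          have hneV : ((oB v (rr u v (i+1))).image (dist v)).Nonempty :=
            ⟨_, mem_image_of_mem _ hvo⟩
          set su := ((oB u (rr u v (i+1))).image (dist u)).max' hneU with hsu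
          set sv := ((oB v (rr u v (i+1))).image (dist v)).max' hneV with hsv
          have hsuim : su ∈ (oB u (rr u v (i+1))).image (dist u) := max'_mem _ _
          have hsvim : sv ∈ (oB v (rr u v (i+1))).image (dist v) := max'_mem _ _
          have hsuDU : su ∈ DU u v := by
            rw [mem_image] at hsuim
            obtain ⟨x, _, he⟩ := hsuim
            rw [← he]
            exact mem_union_left _ (mem_image_of_mem _ (mem_univ x))
          have hsvDU : sv ∈ DU u v := by
            rw [mem_image] at hsvim
            obtain ⟨x, _, he⟩ := hsvim
            rw [← he]
            exact mem_union_right _ (mem_image_of_mem _ (mem_univ x))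
          have hsult : su < rr u v (i+1) := by
            rw [mem_image] at hsuim
            obtain ⟨x, hx, he⟩ := hsuim
            rw [oB, mem_filter] at hx
            rw [← he]
            exact hx.2
          have hsvlt : sv < rr u v (i+1) := by
            rw [mem_image] at hsvim
            obtain ⟨x, hx, he⟩ := hsvim
            rw [oB, mem_filter] at hx
            rw [← he]
            exact hx.2
          have hcovu : oB u (rr u v (i+1)) ⊆ cB u (max su sv) := by
            intro x hx
            rw [cB, mem_filter]
            exact ⟨mem_univ x,
              le_trans (le_max' _ _ (mem_image_of_mem _ hx)) (le_max_left su sv)⟩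
          have hcovv : oB v (rr u v (i+1)) ⊆ cB v (max su sv) := by
            intro x hx
            rw [cB, mem_filter]
            exact ⟨mem_univ x,
              le_trans (le_max' _ _ (mem_image_of_mem _ hx)) (le_max_right su sv)⟩
          have hsDU : max su sv ∈ DU u v := by
            rcases max_choice su sv with h | h <;> rw [h]
            · exact hsuDU
            · exact hsvDU
          have hcond_s : condB u v (i+1) (max su sv) :=
            ⟨le_trans hcu (card_le_card hcovu), le_trans hcv (card_le_card hcovv)⟩
          have hsDk : max su sv ∈ Dk u v (i+1) := mem_filter.mpr ⟨hsDU, hcond_s⟩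
          have h1 : rr u v (i+1) ≤ max su sv := by
            unfold rr
            rw [dif_pos ⟨_, hsDk⟩]
            exact le_trans (min_le_right _ _) (min'_le _ _ hsDk)
          have h2 : max su sv < rr u v (i+1) := max_lt hsult hsvlt
          linarith
        have hr24 : rr u v (i+1) ≤ dist u v / 4 := rr_le u v (i+1)
        rcases hopen with hop | hop
        · -- w = v, w' = u
          have hdisjSS' : cB v (rr u v i) ∩ oB u (rr u v (i+1)) = ∅ := by
            apply Finset.eq_empty_iff_forall_notMem.mpr
            intro x hx
            rw [mem_inter, cB, oB, mem_filter, mem_filter] at hx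
            have htr := dist_triangle u x v
            have hcc : dist x v = dist v x := dist_comm x v
            linarith [hx.1.2, hx.2.2]
          have hScard : 2^((i+1)-1) ≤ (cB v (rr u v i)).card := by
            simpa using hcondi.2
          have hSr : ∀ a ∈ cB v (rr u v i), dist v a ≤ rr u v i :=
            fun a ha => (mem_filter.mp ha).2
          have hS'r : ∀ a, a ∉ oB u (rr u v (i+1)) → rr u v (i+1) ≤ dist u a := by
            intro a ha
            rw [oB, mem_filter] at ha
            push_neg at ha
            exact ha (mem_univ a)
          have hcore := scale_core (i+1) (by omega) v u (cB v (rr u v i))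
            (oB u (rr u v (i+1))) hdisjSS' hScard hop (rr u v i) (rr u v (i+1))
            (le_of_lt hlt) hSr hS'r
          have hflip : ∀ A ∈ (Finset.univ : Finset M).powerset,
              Pw ((2⁻¹:ℝ)^(i+1)) A * |dA A v - dA A u|
                = Pw ((2⁻¹:ℝ)^(i+1)) A * |dA A u - dA A v| := by
            intro A _
            rw [abs_sub_comm]
          rwa [Finset.sum_congr rfl hflip] at hcore
        · -- w = u, w' = v
          have hdisjSS' : cB u (rr u v i) ∩ oB v (rr u v (i+1)) = ∅ := by
            apply Finset.eq_empty_iff_forall_notMem.mpr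
            intro x hx
            rw [mem_inter, cB, oB, mem_filter, mem_filter] at hx
            have htr := dist_triangle u x v
            have hcc : dist x v = dist v x := dist_comm x v
            linarith [hx.1.2, hx.2.2]
          have hScard : 2^((i+1)-1) ≤ (cB u (rr u v i)).card := by
            simpa using hcondi.1
          have hSr : ∀ a ∈ cB u (rr u v i), dist u a ≤ rr u v i :=
            fun a ha => (mem_filter.mp ha).2
          have hS'r : ∀ a, a ∉ oB v (rr u v (i+1)) → rr u v (i+1) ≤ dist v a := by
            intro a ha
            rw [oB, mem_filter] at ha
            push_neg at ha
            exact ha (mem_univ a)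
          exact scale_core (i+1) (by omega) u v (cB u (rr u v i))
            (oB v (rr u v (i+1))) hdisjSS' hScard hop (rr u v i) (rr u v (i+1))
            (le_of_lt hlt) hSr hS'r
      · push_neg at hlt
        have : (1/12) * (rr u v (i+1) - rr u v i) ≤ 0 := by nlinarith
        linarith
    have htel : ∑ i ∈ Finset.range q, (rr u v (i+1) - rr u v i) = rr u v q - rr u v 0 :=
      Finset.sum_range_sub (rr u v) q
    have h1 : ∑ i ∈ Finset.range q, (1/12) * (rr u v (i+1) - rr u v i) ≤ FF q u v :=
      sum_le_sum hscale
    rw [← Finset.mul_sum, htel, rr_zero u v hd, rr_top u v q hq hd] at h1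
    linarith

end MetricPart2

end HSTAux

namespace HSTAux

open Finset

theorem cut_measure (M : Type) [MetricSpace M] [Fintype M] (h2 : 2 ≤ Fintype.card M) :
    ∃ (J : Finset (ℕ × Finset M × ℝ)) (μ : ℕ × Finset M × ℝ → ℝ)
      (Sc : ℕ × Finset M × ℝ → Finset M),
      (∀ j, 0 ≤ μ j) ∧ (∀ j ∈ J, (Sc j).Nonempty ∧ Sc j ≠ Finset.univ) ∧
      (∀ u v : M, dist u v ≤ ∑ j ∈ J, μ j * chi (Sc j) u v) ∧
      (∀ u v : M, ∑ j ∈ J, μ j * chi (Sc j) u v ≤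
        48 * (Nat.clog 2 (Fintype.card M) : ℝ) * dist u v) := by
  classical
  set q := Nat.clog 2 (Fintype.card M) with hqdef
  set μ : ℕ × Finset M × ℝ → ℝ :=
    fun j => 48 * (Pw ((2⁻¹:ℝ)^(j.1+1)) j.2.1 * gapV (Finset.image (dA j.2.1) Finset.univ) j.2.2)
    with hμdef
  set Sc : ℕ × Finset M × ℝ → Finset M :=
    fun j => Finset.univ.filter (fun x => dA j.2.1 x ≤ j.2.2) with hScdef
  set J0 : Finset (ℕ × Finset M × ℝ) :=
    (Finset.range q ×ˢ (Finset.univ : Finset M).powerset).biUnion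
      (fun pr => (Finset.image (dA pr.2) Finset.univ).image (fun c => (pr.1, pr.2, c)))
    with hJ0def
  set J : Finset (ℕ × Finset M × ℝ) := J0.filter (fun j => Sc j ≠ Finset.univ) with hJdef
  have hμ0 : ∀ j, 0 ≤ μ j := by
    intro j
    rw [hμdef]
    have h1 := Pw_nonneg (p_mem j.1).1 (p_mem j.1).2 j.2.1
    have h2 := gapV_nonneg (Finset.image (dA j.2.1) Finset.univ) j.2.2
    positivity
  have hchi : ∀ (A : Finset M) (c : ℝ) (u v : M),
      chi (Finset.univ.filter (fun x => dA A x ≤ c)) u v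
        = if ((dA A u ≤ c) ↔ (dA A v ≤ c)) then (0:ℝ) else 1 := by
    intro A c u v
    unfold chi
    exact if_congr (iff_congr (by simp) (by simp)) rfl rfl
  have hdisjJ : (↑(Finset.range q ×ˢ (Finset.univ : Finset M).powerset) :
      Set (ℕ × Finset M)).PairwiseDisjoint
      (fun pr => (Finset.image (dA pr.2) Finset.univ).image (fun c => (pr.1, pr.2, c))) := by
    intro p1 _ p2 _ hne
    apply Finset.disjoint_left.mpr
    intro j hj1 hj2
    rw [mem_image] at hj1 hj2
    obtain ⟨c1, _, he1⟩ := hj1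
    obtain ⟨c2, _, he2⟩ := hj2
    apply hne
    have h1 : p1.1 = p2.1 := by
      have := congrArg Prod.fst (he1.trans he2.symm)
      simpa using this
    have h2 : p1.2 = p2.2 := by
      have := congrArg (fun z : ℕ × Finset M × ℝ => z.2.1) (he1.trans he2.symm)
      simpa using this
    exact Prod.ext h1 h2
  have hinj : ∀ (pr : ℕ × Finset M), ∀ x ∈ Finset.image (dA pr.2) Finset.univ,
      ∀ y ∈ Finset.image (dA pr.2) Finset.univ,
      (pr.1, pr.2, x) = (pr.1, pr.2, y) → x = y := by
    intro pr x _ y _ h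
    have := congrArg (fun z : ℕ × Finset M × ℝ => z.2.2) h
    simpa using this
  have hJ0sum : ∀ u v : M, ∑ j ∈ J0, μ j * chi (Sc j) u v = 48 * FF q u v := by
    intro u v
    rw [hJ0def, Finset.sum_biUnion hdisjJ]
    have hstep : ∀ pr ∈ Finset.range q ×ˢ (Finset.univ : Finset M).powerset,
        (∑ j ∈ (Finset.image (dA pr.2) Finset.univ).image (fun c => (pr.1, pr.2, c)),
          μ j * chi (Sc j) u v)
        = 48 * (Pw ((2⁻¹:ℝ)^(pr.1+1)) pr.2 * |dA pr.2 u - dA pr.2 v|) := by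
      intro pr _
      rw [Finset.sum_image (hinj pr)]
      rw [line_cut (dA pr.2) u v, Finset.mul_sum, Finset.mul_sum]
      apply Finset.sum_congr rfl
      intro c _
      rw [hμdef, hScdef]
      simp only []
      rw [hchi]
      ring
    rw [Finset.sum_congr rfl hstep, FF, Finset.mul_sum, Finset.sum_product]
    apply Finset.sum_congr rfl
    intro i _
    rw [Finset.mul_sum]
  have hJsum : ∀ u v : M, ∑ j ∈ J, μ j * chi (Sc j) u v = 48 * FF q u v := by
    intro u v
    rw [← hJ0sum u v]
    have hkey := Finset.sum_filter_add_sum_filter_not J0 (fun j => Sc j ≠ Finset.univ)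
      (fun j => μ j * chi (Sc j) u v)
    have hz : ∑ j ∈ J0.filter (fun j => ¬(Sc j ≠ Finset.univ)),
        μ j * chi (Sc j) u v = 0 := by
      apply Finset.sum_eq_zero
      intro j hj
      rw [mem_filter, not_not] at hj
      have : chi (Sc j) u v = 0 := by
        rw [hj.2]
        unfold chi
        rw [if_pos (by simp)]
      rw [this, mul_zero]
    rw [hJdef]
    rw [← hkey, hz, add_zero]
  have hmemJ0 : ∀ j ∈ J0, ∃ (i : ℕ) (A : Finset M) (y : M), j = (i, A, dA A y) := by
    intro j hj
    rw [hJ0def, Finset.mem_biUnion] at hj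
    obtain ⟨pr, _, hj⟩ := hj
    rw [Finset.mem_image] at hj
    obtain ⟨c, hc, he⟩ := hj
    rw [Finset.mem_image] at hc
    obtain ⟨y, _, hey⟩ := hc
    exact ⟨pr.1, pr.2, y, by rw [← he, ← hey]⟩
  refine ⟨J, μ, Sc, hμ0, ?_, ?_, ?_⟩
  · intro j hj
    rw [hJdef, mem_filter] at hj
    constructor
    · obtain ⟨i, A, y, he⟩ := hmemJ0 j hj.1
      refine ⟨y, ?_⟩
      rw [hScdef, he]
      simp only []
      exact mem_filter.mpr ⟨mem_univ y, le_refl _⟩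
    · exact hj.2
  · intro u v
    rw [hJsum u v]
    exact FF_lower q (Nat.le_pow_clog (by norm_num) _) u v
  · intro u v
    rw [hJsum u v]
    have := FF_upper q u v
    have hd := dist_nonneg (x := u) (y := v)
    nlinarith [FF_upper q u v]

end HSTAux

open HSTAux Finset

/-- There is a universal constant `C` such that every metric
space on `n ≥ 2` points embeds into a finitely supported distribution over
HSTs of depth at most `C·log n`, each having the `n` points as its leaf set,
with expected distortion at most `C·log n`. -/
theorem hst_embedding :
    ∃ C : ℝ, 0 < C ∧
      ∀ (M : Type) [MetricSpace M] [Fintype M] (n : ℕ), 2 ≤ n → Fintype.card M = n →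
        ∃ (N : ℕ) (T : Fin N → FinRootedTree)
          (len : (i : Fin N) → (T i).V → ℝ)
          (emb : (i : Fin N) → M → (T i).V)
          (lam : Fin N → ℝ),
          (∀ i, IsHSTLen (T i) (len i)) ∧
          (∀ i v, IsLeaf (T i) v → ((T i).depth v : ℝ) ≤ C * Real.log n) ∧
          (∀ i, Function.Injective (emb i)) ∧
          (∀ i x, IsLeaf (T i) (emb i x)) ∧
          (∀ i v, IsLeaf (T i) v → ∃ x : M, emb i x = v) ∧
          (∀ i, 0 ≤ lam i) ∧ (∑ i, lam i = 1) ∧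
          (∀ u v : M,
            dist u v ≤ (∑ i, lam i * treeDist (T i) (len i) (emb i u) (emb i v)) ∧
            (∑ i, lam i * treeDist (T i) (len i) (emb i u) (emb i v)) ≤
              C * Real.log n * dist u v) := by
    classical
  refine ⟨200, by norm_num, ?_⟩
  intro M _ _ n hn hcard
  subst hcard
  set n := Fintype.card M with hndef
  obtain ⟨J, μ, Sc, hμ0, hSc, hlow, hhigh⟩ := cut_measure M hn
  set q := Nat.clog 2 n with hqdef
  -- log facts
  have hlog2 : (0.6931471803 : ℝ) < Real.log 2 := Real.log_two_gt_d9
  have hn2 : (2:ℝ) ≤ (n:ℝ) := by exact_mod_cast hn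
  have hL : Real.log 2 ≤ Real.log n := Real.log_le_log (by norm_num) hn2
  have hLpos : 0 < Real.log (n:ℝ) := by linarith
  -- q bound
  have hq1 : 1 ≤ q := Nat.clog_pos (by norm_num) hn
  have hq2 : (q:ℝ) * Real.log 2 ≤ Real.log 2 + Real.log n := by
    have hpow : 2 ^ (q - 1) < n := by
      by_contra hc
      push_neg at hc
      have := (Nat.clog_le_iff_le_pow (by norm_num)).mpr hc
      omega
    have hpowR : (2:ℝ) ^ (q-1) < (n:ℝ) := by exact_mod_cast hpow
    have hlog : Real.log ((2:ℝ)^(q-1)) < Real.log n :=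
      Real.log_lt_log (by positivity) hpowR
    rw [Real.log_pow] at hlog
    have hcast : ((q - 1 : ℕ) : ℝ) = (q:ℝ) - 1 := by
      have : (1:ℕ) ≤ q := hq1
      push_cast [Nat.cast_sub this]
      ring
    rw [hcast] at hlog
    nlinarith
  have hqbound : 48 * (q:ℝ) + 1 ≤ 200 * Real.log n := by
    have key2 : (48 * (q:ℝ) + 1) * Real.log 2 ≤ 49 * Real.log 2 + 48 * Real.log n := by
      nlinarith
    have key3 : 49 * Real.log 2 + 48 * Real.log n ≤ 97 * Real.log n := by nlinarith
    have key4 : 97 * Real.log n ≤ (200 * Real.log n) * Real.log 2 := by nlinarith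
    have := le_trans (le_trans key2 key3) key4
    have hpos : (0:ℝ) < Real.log 2 := by linarith
    exact le_of_mul_le_mul_right this hpos
  -- total weight
  set W := ∑ j ∈ J, μ j with hWdef
  obtain ⟨u0, v0, hu0v0⟩ := Fintype.exists_pair_of_one_lt_card (by omega : 1 < Fintype.card M)
  have hWpos : 0 < W := by
    have h1 := hlow u0 v0
    have h2 : ∑ j ∈ J, μ j * chi (Sc j) u0 v0 ≤ W := by
      rw [hWdef]
      apply sum_le_sum
      intro j _
      exact mul_le_of_le_one_right (hμ0 j) (chi_le_one _ _ _)
    have h3 : 0 < dist u0 v0 := dist_pos.mpr hu0v0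
    linarith
  -- minimal distance
  set P : Finset (M × M) := (Finset.univ ×ˢ Finset.univ).filter (fun p => p.1 ≠ p.2) with hPdef
  have hPne : P.Nonempty :=
    ⟨(u0, v0), mem_filter.mpr ⟨mem_product.mpr ⟨mem_univ _, mem_univ _⟩, hu0v0⟩⟩
  set dmin := P.inf' hPne (fun p => dist p.1 p.2) with hdmindef
  have hdminpos : 0 < dmin := by
    rw [hdmindef, Finset.lt_inf'_iff]
    intro b hb
    rw [hPdef, mem_filter] at hb
    exact dist_pos.mpr hb.2
  set ε := min (W/4) (dmin/2) with hεdef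
  have hε0 : 0 < ε := lt_min (by linarith) (by linarith)
  have hεW : ε ≤ W / 4 := min_le_left _ _
  have hεd : ∀ u v : M, u ≠ v → 2 * ε ≤ dist u v := by
    intro u v h
    have h1 : ε ≤ dmin / 2 := min_le_right _ _
    have h2 : dmin ≤ dist u v := by
      rw [hdmindef]
      have hmem : (u, v) ∈ P := mem_filter.mpr ⟨mem_product.mpr ⟨mem_univ u, mem_univ v⟩, h⟩
      exact inf'_le (fun p => dist p.1 p.2) hmem
    linarith
  -- nontriviality of cuts
  have hScne : ∀ j ∈ J, (Sc j).Nonempty := fun j hj => (hSc j hj).1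
  have hScnu : ∀ j ∈ J, Sc j ≠ Finset.univ := fun j hj => (hSc j hj).2
  -- enumeration
  set N := J.card with hNdef
  set e : {x // x ∈ J} ≃ Fin N := J.equivFin with hedef
  refine ⟨N, fun k => cutTree (Sc ↑(e.symm k)), fun k => cutLen (Sc ↑(e.symm k)) W ε,
    fun k x => Sum.inr x, fun k => μ ↑(e.symm k) / W, ?_, ?_, ?_, ?_, ?_, ?_, ?_, ?_⟩
  · intro k
    exact cutTree_isHST _ hWpos hε0 hεW
  · intro k w hleaf
    obtain ⟨x, hx⟩ := cutTree_leaf_eq _ (hScne _ (e.symm k).2) (hScnu _ (e.symm k).2) w hleaf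
    rw [← hx, cutTree_depth_leaf]
    have : (200:ℝ) * Real.log n ≥ 200 * Real.log 2 := by nlinarith
    norm_num
    nlinarith
  · intro k x y h
    exact Sum.inr_injective h
  · intro k x
    exact cutTree_isLeaf _ x
  · intro k w hleaf
    obtain ⟨x, hx⟩ := cutTree_leaf_eq _ (hScne _ (e.symm k).2) (hScnu _ (e.symm k).2) w hleaf
    exact ⟨x, hx⟩
  · intro k
    exact div_nonneg (hμ0 _) (le_of_lt hWpos)
  · have hsum : ∑ k : Fin N, μ ↑(e.symm k) / W = ∑ j ∈ J, μ j / W := by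
      rw [← Finset.sum_coe_sort J (fun j => μ j / W)]
      exact Fintype.sum_equiv e.symm _ _ (fun k => rfl)
    rw [hsum, ← Finset.sum_div]
    exact div_self (ne_of_gt hWpos)
  · intro u v
    have hdist_eq : (∑ k : Fin N, (μ ↑(e.symm k) / W) *
          treeDist (cutTree (Sc ↑(e.symm k))) (cutLen (Sc ↑(e.symm k)) W ε)
            (Sum.inr u) (Sum.inr v))
        = (∑ j ∈ J, μ j * chi (Sc j) u v) + (if u = v then 0 else 2 * ε) := by
      have h1 : (∑ k : Fin N, (μ ↑(e.symm k) / W) *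
            treeDist (cutTree (Sc ↑(e.symm k))) (cutLen (Sc ↑(e.symm k)) W ε)
              (Sum.inr u) (Sum.inr v))
          = ∑ j ∈ J, (μ j / W) *
              treeDist (cutTree (Sc j)) (cutLen (Sc j) W ε) (Sum.inr u) (Sum.inr v) := by
        rw [← Finset.sum_coe_sort J (fun j => (μ j / W) *
          treeDist (cutTree (Sc j)) (cutLen (Sc j) W ε) (Sum.inr u) (Sum.inr v))]
        exact Fintype.sum_equiv e.symm _ _ (fun k => rfl)
      have h2 : ∀ j ∈ J, (μ j / W) *
            treeDist (cutTree (Sc j)) (cutLen (Sc j) W ε) (Sum.inr u) (Sum.inr v)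
          = μ j * chi (Sc j) u v + (μ j / W) * (if u = v then 0 else 2 * ε) := by
        intro j _
        rw [cutTree_treeDist (Sc j) hWpos hε0 u v]
        have hWne : W ≠ 0 := ne_of_gt hWpos
        split_ifs with h <;> field_simp <;> ring
      have h3 : ∑ j ∈ J, (μ j / W) * (if u = v then 0 else 2 * ε)
          = (if u = v then 0 else 2 * ε) := by
        rw [← Finset.sum_mul, ← Finset.sum_div, div_self (ne_of_gt hWpos), one_mul]
      rw [h1, Finset.sum_congr rfl h2, Finset.sum_add_distrib, h3]
    constructor
    · show dist u v ≤ ∑ k : Fin N, (μ ↑(e.symm k) / W) *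
        treeDist (cutTree (Sc ↑(e.symm k))) (cutLen (Sc ↑(e.symm k)) W ε)
          (Sum.inr u) (Sum.inr v)
      rw [hdist_eq]
      have hind : (0:ℝ) ≤ (if u = v then 0 else 2 * ε) := by
        split <;> linarith
      linarith [hlow u v]
    · show (∑ k : Fin N, (μ ↑(e.symm k) / W) *
        treeDist (cutTree (Sc ↑(e.symm k))) (cutLen (Sc ↑(e.symm k)) W ε)
          (Sum.inr u) (Sum.inr v)) ≤ 200 * Real.log n * dist u v
      rw [hdist_eq]
      have hhigh' := hhigh u v
      by_cases huv : u = v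
      · subst huv
        rw [if_pos rfl, add_zero]
        simp only [dist_self, mul_zero] at hhigh' ⊢
        exact hhigh'
      · rw [if_neg huv]
        have h2e : 2 * ε ≤ dist u v := hεd u v huv
        have hdpos : 0 < dist u v := dist_pos.mpr huv
        have hstep : (∑ j ∈ J, μ j * chi (Sc j) u v) + 2 * ε ≤
            (48 * (q:ℝ) + 1) * dist u v := by
          have : 48 * ((Nat.clog 2 n : ℕ):ℝ) * dist u v = 48 * (q:ℝ) * dist u v := by
            rw [← hqdef]
          nlinarith [hhigh']
        calc (∑ j ∈ J, μ j * chi (Sc j) u v) + 2 * ε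
            ≤ (48 * (q:ℝ) + 1) * dist u v := hstep
          _ ≤ 200 * Real.log n * dist u v := by
              apply mul_le_mul_of_nonneg_right hqbound (le_of_lt hdpos) |>.trans_eq rfl
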